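/- Let ν be a probability measure on ℝ^L and let D ⊆ ℝ^L be a measurable set such that ν-almost every h ∈ D is nonzero. Let μ* > 0 and define the policy P*(h) = max(0, P^KKT_h(μ*)) for h ∈ D. Assume P* is ν-integrable on D with ∫_D P*(h) dν(h) = P̄, and assume h ↦ R_h(P*(h)) is ν-integrable on D. Then P* is an optimal power policy: for every measurable Q : ℝ^L → [0,∞) with ∫_D Q(h) dν(h) ≤ P̄ and h ↦ R_h(Q(h)) ν-integrable on D, one has ∫_D R_h(Q(h)) dν(h) ≤ ∫_D R_h(P*(h)) dν(h). -/

import Mathlib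

open scoped BigOperators Classical
open Finset

noncomputable section

/-- Euclidean inner product on `Fin L → ℝ`. -/
def ip {L : ℕ} (x y : Fin L → ℝ) : ℝ := ∑ i, x i * y i

/-- Squared Euclidean norm on `Fin L → ℝ`. -/
def nsq {L : ℕ} (x : Fin L → ℝ) : ℝ := ∑ i, (x i) ^ 2

/-- ε(h) = ‖h‖²‖a‖² − ⟨h,a⟩². -/
def eps {L : ℕ} (a h : Fin L → ℝ) : ℝ := nsq h * nsq a - (ip h a) ^ 2

/-- Symmetric-policy computation rate R_h(P). -/
def Rsym {L : ℕ} (a h : Fin L → ℝ) (P : ℝ) : ℝ :=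
  (1 / 2) * Real.logb 2 ((1 + P * nsq h) / (nsq a + P * eps a h))

/-- The vector √p∘h with entries √(p_l)·h_l. -/
def sqp {L : ℕ} (p h : Fin L → ℝ) : Fin L → ℝ := fun l => Real.sqrt (p l) * h l

/-- Asymmetric-policy computation rate R(h,p). -/
def Rasym {L : ℕ} (a h p : Fin L → ℝ) : ℝ :=
  (1 / 2) * Real.logb 2 ((1 + nsq (sqp p h)) /
    (nsq a + (nsq (sqp p h) * nsq a - (ip (sqp p h) a) ^ 2)))

/-- The KKT water-filling-type solution P^KKT_h(λ). -/
def PKKT {L : ℕ} (a h : Fin L → ℝ) (lam : ℝ) : ℝ :=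
  if ∃ t : ℝ, h = t • a then 1 / lam - 1 / nsq h
  else (-(2 * nsq h * nsq a - (ip h a) ^ 2) +
      Real.sqrt ((2 * nsq h * nsq a - (ip h a) ^ 2) ^ 2 -
        4 * (nsq h * eps a h) * (nsq a - (ip h a) ^ 2 / lam))) /
    (2 * (nsq h * eps a h))

open MeasureTheory

lemma nsq_nonneg {L : ℕ} (x : Fin L → ℝ) : 0 ≤ nsq x :=
  Finset.sum_nonneg fun i _ => sq_nonneg _

lemma nsq_eq_zero {L : ℕ} {x : Fin L → ℝ} (h : nsq x = 0) : x = 0 := by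
  funext i
  have := (Finset.sum_eq_zero_iff_of_nonneg (fun i _ => sq_nonneg (x i))).mp h i (mem_univ i)
  have := sq_eq_zero_iff.mp this
  simpa using this

lemma nsq_pos {L : ℕ} {x : Fin L → ℝ} (hx : x ≠ 0) : 0 < nsq x := by
  rcases lt_or_eq_of_le (nsq_nonneg x) with h | h
  · exact h
  · exact absurd (nsq_eq_zero h.symm) hx

lemma eps_nonneg {L : ℕ} (a h : Fin L → ℝ) : 0 ≤ eps a h := by
  have := Finset.sum_mul_sq_le_sq_mul_sq Finset.univ h a
  unfold eps ip nsq
  nlinarith [this]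

lemma nsq_comb {L : ℕ} (a h : Fin L → ℝ) (X Y : ℝ) :
    nsq (fun i => X * a i - Y * h i)
      = X^2 * nsq a - 2*X*Y* ip h a + Y^2 * nsq h := by
  unfold nsq ip
  simp only [Finset.mul_sum, ← Finset.sum_sub_distrib, ← Finset.sum_add_distrib]
  exact Finset.sum_congr rfl fun i _ => by ring

lemma collinear_of_eps_eq_zero {L : ℕ} {a h : Fin L → ℝ} (ha : a ≠ 0) (hh : h ≠ 0)
    (he : eps a h = 0) : ∃ t : ℝ, h = t • a := by
  have hcomb := nsq_comb a h (nsq h) (ip h a)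
  have hzero : nsq (fun i => nsq h * a i - ip h a * h i) = 0 := by
    rw [hcomb]
    have : eps a h = nsq h * nsq a - (ip h a)^2 := rfl
    nlinarith [nsq_pos hh, he]
  have hw := nsq_eq_zero hzero
  have hwi : ∀ i, nsq h * a i = ip h a * h i := by
    intro i
    have := congrFun hw i
    simp at this
    linarith [this]
  by_cases hip : ip h a = 0
  · exfalso
    apply ha
    funext i
    have := hwi i
    rw [hip, zero_mul] at this
    have hnp := nsq_pos hh
    simpa using (mul_eq_zero.mp this).resolve_left (ne_of_gt hnp)
  · refine ⟨nsq h / ip h a, ?_⟩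
    funext i
    have := hwi i
    have hnp := nsq_pos hh
    simp only [Pi.smul_apply, smul_eq_mul]
    field_simp
    nlinarith [this]

/-- main real-variable lemma -/
lemma key_real (A H E T μ Ps q : ℝ) (hA : 0 < A) (hH : 0 < H) (hE : 0 ≤ E)
    (hT : T = H*A - E) (hTnn : 0 ≤ T) (hμ : 0 < μ) (hPs : 0 ≤ Ps) (hq : 0 ≤ q)
    (K1 : T ≤ μ * ((1+Ps*H)*(A+Ps*E)))
    (K2 : 0 < Ps → μ * ((1+Ps*H)*(A+Ps*E)) ≤ T) :
    Real.log ((1+q*H)/(A+q*E)) - μ*q ≤ Real.log ((1+Ps*H)/(A+Ps*E)) - μ*Ps := by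
  have h1 : 0 < 1 + q*H := by nlinarith
  have h2 : 0 < A + q*E := by nlinarith
  have h3 : 0 < 1 + Ps*H := by nlinarith
  have h4 : 0 < A + Ps*E := by nlinarith
  obtain ⟨u, hu⟩ : ∃ u, u = (1+q*H)*(A+Ps*E) := ⟨_, rfl⟩
  obtain ⟨v, hv⟩ : ∃ v, v = (1+Ps*H)*(A+q*E) := ⟨_, rfl⟩
  have hupos : 0 < u := hu ▸ mul_pos h1 h4
  have hvpos : 0 < v := hv ▸ mul_pos h3 h2
  have hlog : Real.log ((1+q*H)/(A+q*E)) - Real.log ((1+Ps*H)/(A+Ps*E))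
      = Real.log (u/v) := by
    rw [Real.log_div (ne_of_gt h1) (ne_of_gt h2), Real.log_div (ne_of_gt h3) (ne_of_gt h4),
      Real.log_div (ne_of_gt hupos) (ne_of_gt hvpos), hu, hv,
      Real.log_mul (ne_of_gt h1) (ne_of_gt h4), Real.log_mul (ne_of_gt h3) (ne_of_gt h2)]
    ring
  have hb : Real.log (u/v) ≤ u/v - 1 := Real.log_le_sub_one_of_pos (by positivity)
  have huv : u - v = (q - Ps) * T := by rw [hu, hv, hT]; ring
  have hfrac : u/v - 1 = (q-Ps)*T / v := by
    rw [div_sub_one (ne_of_gt hvpos), huv]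
  have hmain : (q-Ps)*T ≤ μ*(q-Ps)*v := by
    rcases le_or_gt q Ps with hle | hlt
    · rcases eq_or_lt_of_le hPs with hPs0 | hPs0
      · have hq0 : q = 0 := le_antisymm (by rw [← hPs0] at hle; exact hle) hq
        rw [hq0, ← hPs0]; simp
      · have hK2 := K2 hPs0
        have hAE : A + q*E ≤ A + Ps*E := by nlinarith
        have hvle : v ≤ (1+Ps*H)*(A+Ps*E) := by
          rw [hv]; exact mul_le_mul_of_nonneg_left hAE h3.le
        have hTv : μ*v ≤ T := le_trans (mul_le_mul_of_nonneg_left hvle hμ.le) hK2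
        have h' : (Ps-q)*(μ*v) ≤ (Ps-q)*T :=
          mul_le_mul_of_nonneg_left hTv (sub_nonneg.mpr hle)
        calc (q-Ps)*T = -((Ps-q)*T) := by ring
          _ ≤ -((Ps-q)*(μ*v)) := by linarith
          _ = μ*(q-Ps)*v := by ring
    · have hAE : A + Ps*E ≤ A + q*E := by nlinarith
      have hvge : (1+Ps*H)*(A+Ps*E) ≤ v := by
        rw [hv]; exact mul_le_mul_of_nonneg_left hAE h3.le
      have hTv : T ≤ μ*v := le_trans K1 (mul_le_mul_of_nonneg_left hvge hμ.le)
      calc (q-Ps)*T ≤ (q-Ps)*(μ*v) :=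
            mul_le_mul_of_nonneg_left hTv (sub_nonneg.mpr hlt.le)
        _ = μ*(q-Ps)*v := by ring
  have hdiv : (q-Ps)*T / v ≤ μ*(q-Ps) := by
    rw [div_le_iff₀ hvpos]; linarith [hmain]
  have hfin : Real.log (u/v) ≤ μ*(q-Ps) := by
    calc Real.log (u/v) ≤ u/v - 1 := hb
      _ = (q-Ps)*T / v := hfrac
      _ ≤ μ*(q-Ps) := hdiv
  linarith [hfin, hlog]

lemma nsq_smul {L : ℕ} (a : Fin L → ℝ) (t : ℝ) : nsq (t • a) = t^2 * nsq a := by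
  unfold nsq
  rw [Finset.mul_sum]
  exact Finset.sum_congr rfl fun i _ => by simp [Pi.smul_apply, smul_eq_mul]; ring

lemma ip_smul {L : ℕ} (a : Fin L → ℝ) (t : ℝ) : ip (t • a) a = t * nsq a := by
  unfold ip nsq
  rw [Finset.mul_sum]
  exact Finset.sum_congr rfl fun i _ => by simp [Pi.smul_apply, smul_eq_mul]; ring

lemma kkt_cond {L : ℕ} (a h : Fin L → ℝ) (ha : a ≠ 0) (hh : h ≠ 0) (μ : ℝ) (hμ : 0 < μ) :
    (ip h a)^2 ≤ μ * ((1 + (max 0 (PKKT a h μ)) * nsq h) *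
        (nsq a + (max 0 (PKKT a h μ)) * eps a h)) ∧
    (0 < max 0 (PKKT a h μ) → μ * ((1 + (max 0 (PKKT a h μ)) * nsq h) *
        (nsq a + (max 0 (PKKT a h μ)) * eps a h)) ≤ (ip h a)^2) := by
  have hA : 0 < nsq a := nsq_pos ha
  have hH : 0 < nsq h := nsq_pos hh
  by_cases hcol : ∃ t : ℝ, h = t • a
  · -- collinear case
    obtain ⟨t, rfl⟩ := hcol
    have ht : t ≠ 0 := by rintro rfl; simp at hh
    have hE : eps a (t • a) = 0 := by
      unfold eps; rw [nsq_smul, ip_smul]; ring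
    have hT : (ip (t • a) a)^2 = nsq (t • a) * nsq a := by
      rw [ip_smul, nsq_smul]; ring
    have hPK : PKKT a (t • a) μ = 1/μ - 1/nsq (t • a) := by
      unfold PKKT; rw [if_pos ⟨t, rfl⟩]
    rcases le_or_gt (PKKT a (t • a) μ) 0 with hle | hlt
    · rw [max_eq_left hle]
      have hHμ : nsq (t • a) ≤ μ := by
        rw [hPK] at hle
        have h1 : 1/μ ≤ 1/nsq (t • a) := by linarith
        have := (div_le_div_iff₀ hμ hH).mp h1
        linarith
      constructor
      · rw [hT, hE]; simp
        nlinarith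
      · intro hc; simp at hc
    · rw [max_eq_right hlt.le, hE, hPK]
      have key : μ * ((1 + (1/μ - 1/nsq (t • a)) * nsq (t • a)) * (nsq a + (1/μ - 1/nsq (t • a)) * 0))
          = nsq (t • a) * nsq a := by
        field_simp
        ring
      constructor
      · rw [hT]
        rw [key]
      · intro _
        rw [hT, key]
  · -- non-collinear case
    have hE : 0 < eps a h := by
      rcases lt_or_eq_of_le (eps_nonneg a h) with h' | h'
      · exact h'
      · exact absurd (collinear_of_eps_eq_zero ha hh h'.symm) hcol
    obtain ⟨A, hA'⟩ : ∃ A, A = nsq a := ⟨_, rfl⟩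
    obtain ⟨H, hH'⟩ : ∃ H, H = nsq h := ⟨_, rfl⟩
    obtain ⟨E, hE'⟩ : ∃ E, E = eps a h := ⟨_, rfl⟩
    obtain ⟨T, hT'⟩ : ∃ T, T = (ip h a)^2 := ⟨_, rfl⟩
    have hTdef : T = H*A - E := by rw [hT', hH', hA', hE']; unfold eps; ring
    have hApos : 0 < A := hA' ▸ hA
    have hHpos : 0 < H := hH' ▸ hH
    have hEpos : 0 < E := hE' ▸ hE
    have hTnn : 0 ≤ T := hT' ▸ sq_nonneg _
    obtain ⟨b, hb⟩ : ∃ b, b = 2*H*A - T := ⟨_, rfl⟩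
    obtain ⟨d, hd⟩ : ∃ d, d = H*E := ⟨_, rfl⟩
    obtain ⟨c, hc⟩ : ∃ c, c = A - T/μ := ⟨_, rfl⟩
    have hbE : b = H*A + E := by rw [hb, hTdef]; ring
    have hbpos : 0 < b := by rw [hbE]; positivity
    have hdpos : 0 < d := by rw [hd]; positivity
    have hdisc : b^2 - 4*d*c = T^2 + 4*(H*E)*(T/μ) := by
      rw [hbE, hd, hc, hTdef]; field_simp; ring
    have hdiscnn : 0 ≤ b^2 - 4*d*c := by
      rw [hdisc]; positivity
    have hPKeq : PKKT a h μ = (-b + Real.sqrt (b^2 - 4*d*c)) / (2*d) := by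
      unfold PKKT; rw [if_neg hcol, hb, hd, hc, hT', hH', hA', hE']
    have hpsi : ∀ P : ℝ, μ * ((1 + P * nsq h) * (nsq a + P * eps a h)) - (ip h a)^2
        = μ * (d*P^2 + b*P + c) := by
      intro P
      rw [← hA', ← hH', ← hE', ← hT', hd, hbE, hc, hTdef]
      field_simp
      ring
    rcases le_or_gt (PKKT a h μ) 0 with hle | hlt
    · rw [max_eq_left hle]
      have hsle : Real.sqrt (b^2 - 4*d*c) ≤ b := by
        rw [hPKeq] at hle
        have h2d : 0 < 2*d := by linarith
        have := (div_nonpos_iff.mp hle)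
        rcases this with ⟨h1, h2⟩ | ⟨h1, h2⟩
        · linarith
        · linarith
      have hcnn : 0 ≤ c := by
        have hs : Real.sqrt (b^2-4*d*c)^2 = b^2 - 4*d*c := Real.sq_sqrt hdiscnn
        have hsnn : 0 ≤ Real.sqrt (b^2-4*d*c) := Real.sqrt_nonneg _
        nlinarith [hsle, hs, hsnn]
      constructor
      · have := hpsi 0
        simp only [zero_mul, mul_zero, zero_add, add_zero, zero_pow, mul_one] at this
        have hc0 : 0 ≤ μ * (d*0^2 + b*0 + c) := by
          have : 0 ≤ μ * c := mul_nonneg hμ.le hcnn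
          simpa using this
        nlinarith [hpsi 0]
      · intro hcon; simp at hcon
    · rw [max_eq_right hlt.le]
      have hs : Real.sqrt (b^2-4*d*c)^2 = b^2 - 4*d*c := Real.sq_sqrt hdiscnn
      obtain ⟨P0, hP0⟩ : ∃ P0, P0 = PKKT a h μ := ⟨_, rfl⟩
      have hsqrt : Real.sqrt (b^2-4*d*c) = 2*d*P0 + b := by
        rw [hP0, hPKeq]; field_simp; ring
      have hroot : d*P0^2 + b*P0 + c = 0 := by
        have h2 : (2*d*P0 + b)^2 = b^2 - 4*d*c := by rw [← hsqrt]; exact hs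
        have h4 : 4*d*(d*P0^2 + b*P0 + c) = 0 := by linear_combination h2
        rcases mul_eq_zero.mp h4 with h | h
        · linarith
        · exact h
      have hzero : μ * ((1 + (PKKT a h μ) * nsq h) * (nsq a + (PKKT a h μ) * eps a h))
          - (ip h a)^2 = 0 := by
        rw [hpsi (PKKT a h μ), ← hP0, hroot, mul_zero]
      constructor
      · linarith [hzero]
      · intro _; linarith [hzero]


lemma pointwise_opt {L : ℕ} (a h : Fin L → ℝ) (ha : a ≠ 0) (hh : h ≠ 0)
    (μ : ℝ) (hμ : 0 < μ) (q : ℝ) (hq : 0 ≤ q) :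
    Rsym a h q - μ/(2*Real.log 2) * q ≤
      Rsym a h (max 0 (PKKT a h μ)) - μ/(2*Real.log 2) * (max 0 (PKKT a h μ)) := by
  have hA := nsq_pos ha
  have hH := nsq_pos hh
  have hE := eps_nonneg a h
  obtain ⟨K1, K2⟩ := kkt_cond a h ha hh μ hμ
  have hPs : (0:ℝ) ≤ max 0 (PKKT a h μ) := le_max_left _ _
  have key := key_real (nsq a) (nsq h) (eps a h) ((ip h a)^2) μ (max 0 (PKKT a h μ)) q
    hA hH hE (by unfold eps; ring) (sq_nonneg _) hμ hPs hq K1 K2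
  have hlog2 : 0 < Real.log 2 := Real.log_pos one_lt_two
  have hrw : ∀ P : ℝ, Rsym a h P
      = Real.log ((1+P*nsq h)/(nsq a + P*eps a h)) / (2*Real.log 2) := by
    intro P; unfold Rsym Real.logb; ring
  calc Rsym a h q - μ/(2*Real.log 2)*q
      = (Real.log ((1+q*nsq h)/(nsq a + q*eps a h)) - μ*q)/(2*Real.log 2) := by
        rw [hrw]; ring
    _ ≤ (Real.log ((1+(max 0 (PKKT a h μ))*nsq h)/(nsq a + (max 0 (PKKT a h μ))*eps a h))
          - μ*(max 0 (PKKT a h μ)))/(2*Real.log 2) := by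
        gcongr
    _ = Rsym a h (max 0 (PKKT a h μ)) - μ/(2*Real.log 2) * (max 0 (PKKT a h μ)) := by
        rw [hrw]; ring


/-- in the continuous case, the clipped KKT policy P*(h) = max(0, P^KKT_h(μ*))
meeting the power budget with equality is optimal among all measurable nonnegative policies
meeting the budget. -/
theorem stmt18 {L : ℕ} (hL : 1 ≤ L)
    (a : Fin L → ℝ) (ha : a ≠ 0) (haint : ∀ i, ∃ n : ℤ, a i = (n : ℝ))
    (ν : Measure (Fin L → ℝ)) [IsProbabilityMeasure ν]
    (D : Set (Fin L → ℝ)) (hD : MeasurableSet D)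
    (hDne : ∀ᵐ x ∂ν, x ∈ D → x ≠ 0)
    (μstar : ℝ) (hμ : 0 < μstar)
    (Pbar : ℝ) (hPbar : 0 < Pbar)
    (hPint : IntegrableOn (fun x => max 0 (PKKT a x μstar)) D ν)
    (hPsum : ∫ x in D, max 0 (PKKT a x μstar) ∂ν = Pbar)
    (hRint : IntegrableOn (fun x => Rsym a x (max 0 (PKKT a x μstar))) D ν) :
    ∀ Q : (Fin L → ℝ) → ℝ, Measurable Q → (∀ x, 0 ≤ Q x) →
      (∫⁻ x in D, ENNReal.ofReal (Q x) ∂ν) ≤ ENNReal.ofReal Pbar →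
      IntegrableOn (fun x => Rsym a x (Q x)) D ν →
      ∫ x in D, Rsym a x (Q x) ∂ν
        ≤ ∫ x in D, Rsym a x (max 0 (PKKT a x μstar)) ∂ν := by
  intro Q hQm hQnn hQbud hRQint
  set c : ℝ := μstar / (2 * Real.log 2) with hc
  have hlog2 : 0 < Real.log 2 := Real.log_pos one_lt_two
  have hcpos : 0 < c := by rw [hc]; positivity
  -- Q is integrable on D
  have hQint : IntegrableOn Q D ν := by
    refine ⟨hQm.aestronglyMeasurable, ?_⟩
    rw [hasFiniteIntegral_iff_ofReal (Filter.Eventually.of_forall hQnn)]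
    exact lt_of_le_of_lt hQbud ENNReal.ofReal_lt_top
  -- ∫ Q ≤ Pbar
  have hQle : ∫ x in D, Q x ∂ν ≤ Pbar := by
    have h1 : ENNReal.ofReal (∫ x in D, Q x ∂ν) = ∫⁻ x in D, ENNReal.ofReal (Q x) ∂ν :=
      ofReal_integral_eq_lintegral_ofReal hQint (Filter.Eventually.of_forall hQnn)
    have h2 : ENNReal.ofReal (∫ x in D, Q x ∂ν) ≤ ENNReal.ofReal Pbar := h1 ▸ hQbud
    exact (ENNReal.ofReal_le_ofReal_iff hPbar.le).mp h2
  -- pointwise inequality a.e. on D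
  have hmono : ∀ᵐ x ∂ν.restrict D,
      Rsym a x (Q x) - c * Q x ≤
        Rsym a x (max 0 (PKKT a x μstar)) - c * (max 0 (PKKT a x μstar)) := by
    rw [ae_restrict_iff' hD]
    filter_upwards [hDne] with x hx hxD
    exact pointwise_opt a x ha (hx hxD) μstar hμ (Q x) (hQnn x)
  have int1 : Integrable (fun x => Rsym a x (Q x) - c * Q x) (ν.restrict D) :=
    hRQint.sub (hQint.const_mul c)
  have int2 : Integrable (fun x => Rsym a x (max 0 (PKKT a x μstar))
      - c * (max 0 (PKKT a x μstar))) (ν.restrict D) :=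
    hRint.sub (hPint.const_mul c)
  have hineq := integral_mono_ae int1 int2 hmono
  rw [integral_sub hRQint (hQint.const_mul c),
    integral_sub hRint (hPint.const_mul c),
    integral_const_mul, integral_const_mul, hPsum] at hineq
  have : c * ∫ x in D, Q x ∂ν ≤ c * Pbar :=
    mul_le_mul_of_nonneg_left hQle hcpos.le
  linarith
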